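/- Let ρ be an object of a regular C*-tensor category with conjugate ρ̄ and standard pair of conjugation operators (R,R̄). Let ρ̃ be any conjugate of ρ and T ∈ (ι,ρ̃ρ). Then there exists T̄ ∈ (ι,ρρ̃) such that (T,T̄) is a standard pair of conjugation operators if and only if there is a unitary U ∈ (ρ̄,ρ̃) such that (U×1_ρ)∘R = T. -/

import Mathlib

noncomputable section

/-- A strict `C*`-tensor category: a `C*`-category (Banach morphism spaces,
submultiplicative bilinear composition, antilinear involutive contravariant
`*` with the `C*`-identity, nonzero endomorphism spaces) with a bilinear
tensor product which is strictly associative and strictly unital on objects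
and on morphisms (the associativity and unit constraints being identities). -/
structure StrictCTC where
  Obj : Type
  Hom : Obj → Obj → Type
  [normed : ∀ ρ σ : Obj, NormedAddCommGroup (Hom ρ σ)]
  [normedSpace : ∀ ρ σ : Obj, NormedSpace ℂ (Hom ρ σ)]
  [complete : ∀ ρ σ : Obj, CompleteSpace (Hom ρ σ)]
  id : ∀ ρ : Obj, Hom ρ ρ
  comp : ∀ {ρ σ τ : Obj}, Hom σ τ → Hom ρ σ → Hom ρ τ
  comp_id : ∀ {ρ σ : Obj} (f : Hom ρ σ), comp f (id ρ) = f
  id_comp : ∀ {ρ σ : Obj} (f : Hom ρ σ), comp (id σ) f = f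
  comp_assoc : ∀ {ρ σ τ υ : Obj} (f : Hom τ υ) (g : Hom σ τ) (h : Hom ρ σ),
    comp (comp f g) h = comp f (comp g h)
  comp_add_left : ∀ {ρ σ τ : Obj} (f g : Hom σ τ) (h : Hom ρ σ),
    comp (f + g) h = comp f h + comp g h
  comp_add_right : ∀ {ρ σ τ : Obj} (f : Hom σ τ) (g h : Hom ρ σ),
    comp f (g + h) = comp f g + comp f h
  comp_smul_left : ∀ {ρ σ τ : Obj} (c : ℂ) (f : Hom σ τ) (h : Hom ρ σ),
    comp (c • f) h = c • comp f h
  comp_smul_right : ∀ {ρ σ τ : Obj} (c : ℂ) (f : Hom σ τ) (h : Hom ρ σ),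
    comp f (c • h) = c • comp f h
  norm_comp_le : ∀ {ρ σ τ : Obj} (f : Hom σ τ) (g : Hom ρ σ),
    ‖comp f g‖ ≤ ‖f‖ * ‖g‖
  star : ∀ {ρ σ : Obj}, Hom ρ σ → Hom σ ρ
  star_star : ∀ {ρ σ : Obj} (f : Hom ρ σ), star (star f) = f
  star_id : ∀ ρ : Obj, star (id ρ) = id ρ
  star_comp : ∀ {ρ σ τ : Obj} (f : Hom σ τ) (g : Hom ρ σ),
    star (comp f g) = comp (star g) (star f)
  star_add : ∀ {ρ σ : Obj} (f g : Hom ρ σ), star (f + g) = star f + star g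
  star_smul : ∀ {ρ σ : Obj} (c : ℂ) (f : Hom ρ σ),
    star (c • f) = (starRingEnd ℂ c) • star f
  cstar_norm : ∀ {ρ σ : Obj} (f : Hom ρ σ), ‖comp (star f) f‖ = ‖f‖ ^ 2
  id_ne_zero : ∀ ρ : Obj, id ρ ≠ 0
  -- the strict tensor structure
  tObj : Obj → Obj → Obj
  tHom : ∀ {ρ σ ρ' σ' : Obj}, Hom ρ σ → Hom ρ' σ' → Hom (tObj ρ ρ') (tObj σ σ')
  tHom_add_left : ∀ {ρ σ ρ' σ' : Obj} (f g : Hom ρ σ) (h : Hom ρ' σ'),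
    tHom (f + g) h = tHom f h + tHom g h
  tHom_add_right : ∀ {ρ σ ρ' σ' : Obj} (f : Hom ρ σ) (g h : Hom ρ' σ'),
    tHom f (g + h) = tHom f g + tHom f h
  tHom_smul_left : ∀ {ρ σ ρ' σ' : Obj} (c : ℂ) (f : Hom ρ σ) (h : Hom ρ' σ'),
    tHom (c • f) h = c • tHom f h
  tHom_smul_right : ∀ {ρ σ ρ' σ' : Obj} (c : ℂ) (f : Hom ρ σ) (h : Hom ρ' σ'),
    tHom f (c • h) = c • tHom f h
  star_tHom : ∀ {ρ σ ρ' σ' : Obj} (f : Hom ρ σ) (g : Hom ρ' σ'),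
    star (tHom f g) = tHom (star f) (star g)
  tHom_id : ∀ ρ σ : Obj, tHom (id ρ) (id σ) = id (tObj ρ σ)
  interchange : ∀ {ρ σ τ ρ' σ' τ' : Obj}
    (S : Hom σ τ) (S' : Hom σ' τ') (T : Hom ρ σ) (T' : Hom ρ' σ'),
    comp (tHom S S') (tHom T T') = tHom (comp S T) (comp S' T')
  unit : Obj
  tObj_assoc : ∀ ρ σ τ : Obj, tObj ρ (tObj σ τ) = tObj (tObj ρ σ) τ
  unit_tObj : ∀ ρ : Obj, tObj unit ρ = ρ
  tObj_unit : ∀ ρ : Obj, tObj ρ unit = ρ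
  tHom_assoc : ∀ {ρ ρ' σ σ' τ τ' : Obj}
    (f : Hom ρ ρ') (g : Hom σ σ') (h : Hom τ τ'),
    HEq (tHom f (tHom g h)) (tHom (tHom f g) h)
  id_unit_tHom : ∀ {ρ σ : Obj} (f : Hom ρ σ), HEq (tHom (id unit) f) f
  tHom_id_unit : ∀ {ρ σ : Obj} (f : Hom ρ σ), HEq (tHom f (id unit)) f

attribute [instance] StrictCTC.normed StrictCTC.normedSpace StrictCTC.complete

namespace StrictCTC

variable (C : StrictCTC)

/-- The identity morphism transported along an equality of objects.  In a
strict `C*`-tensor category the associativity and unit constraints are the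
morphisms `eqHom (tObj_assoc ρ σ τ)`, `eqHom (unit_tObj ρ)`, `eqHom (tObj_unit ρ)`. -/
def eqHom : ∀ {ρ σ : C.Obj}, ρ = σ → C.Hom ρ σ
  | _, _, rfl => C.id _

/-- A unitary morphism. -/
def IsUnitary {ρ σ : C.Obj} (u : C.Hom ρ σ) : Prop :=
  C.comp (C.star u) u = C.id ρ ∧ C.comp u (C.star u) = C.id σ

/-- A (linear) isometry. -/
def IsIsometry {ρ σ : C.Obj} (V : C.Hom ρ σ) : Prop :=
  C.comp (C.star V) V = C.id ρ

/-- An (orthogonal) projection. -/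
def IsProjection {ρ : C.Obj} (E : C.Hom ρ ρ) : Prop :=
  C.comp E E = E ∧ C.star E = E

/-- Two objects are equivalent if there is a unitary morphism between them. -/
def Equivalent (ρ σ : C.Obj) : Prop :=
  ∃ u : C.Hom ρ σ, C.IsUnitary u

/-- An object `ρ` is irreducible if `(ρ,ρ) = ℂ 1_ρ`. -/
def Irreducible (ρ : C.Obj) : Prop :=
  ∀ f : C.Hom ρ ρ, ∃ c : ℂ, f = c • C.id ρ

/-- `σ` is a subobject of `ρ`:  there is a linear isometry `V ∈ (σ, ρ)`. -/
def Subobject (σ ρ : C.Obj) : Prop :=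
  ∃ V : C.Hom σ ρ, C.IsIsometry V

end StrictCTC

open StrictCTC

/-- A strict `C*`-tensor category is regular if it has subobjects (every
projection comes from an isometry), has finite direct sums, and the unit
object satisfies `(ι,ι) = ℂ 1_ι`. -/
structure IsRegularCTC (C : StrictCTC) : Prop where
  hasSubobjects : ∀ {ρ : C.Obj} (E : C.Hom ρ ρ), C.IsProjection E →
    ∃ (σ : C.Obj) (V : C.Hom σ ρ), C.IsIsometry V ∧ C.comp V (C.star V) = E
  hasSums : ∀ ρ σ : C.Obj, ∃ (τ : C.Obj) (V : C.Hom ρ τ) (W : C.Hom σ τ),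
    C.IsIsometry V ∧ C.IsIsometry W ∧
    C.comp V (C.star V) + C.comp W (C.star W) = C.id τ
  unit_irreducible : C.Irreducible C.unit

namespace StrictCTC

variable (C : StrictCTC)

/-- `(R, R̄)` is a pair of conjugation operators for `ρ` and `ρ̄`, witnessing
that `ρ̄` is conjugate to `ρ`:  `(R̄* × 1_ρ) ∘ (1_ρ × R) = 1_ρ` and
`(R* × 1_ρ̄) ∘ (1_ρ̄ × R̄) = 1_ρ̄` (written with the strict unit and
associativity identifications made explicit by `eqHom`). -/
def ConjPair (ρ ρb : C.Obj)
    (R : C.Hom C.unit (C.tObj ρb ρ)) (Rb : C.Hom C.unit (C.tObj ρ ρb)) : Prop :=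
  C.comp (C.eqHom (C.unit_tObj ρ))
      (C.comp (C.tHom (C.star Rb) (C.id ρ))
        (C.comp (C.eqHom (C.tObj_assoc ρ ρb ρ))
          (C.comp (C.tHom (C.id ρ) R) (C.eqHom (C.tObj_unit ρ).symm)))) = C.id ρ ∧
  C.comp (C.eqHom (C.unit_tObj ρb))
      (C.comp (C.tHom (C.star R) (C.id ρb))
        (C.comp (C.eqHom (C.tObj_assoc ρb ρ ρb))
          (C.comp (C.tHom (C.id ρb) Rb) (C.eqHom (C.tObj_unit ρb).symm)))) = C.id ρb

/-- `ρb` is conjugate to `ρ`. -/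
def Conjugate (ρ ρb : C.Obj) : Prop :=
  ∃ (R : C.Hom C.unit (C.tObj ρb ρ)) (Rb : C.Hom C.unit (C.tObj ρ ρb)),
    C.ConjPair ρ ρb R Rb

/-- A standard pair of conjugation operators for an irreducible object `ρ`:
a pair of conjugation operators with `R* ∘ R = R̄* ∘ R̄`. -/
def IsStandardPairIrr (ρ ρb : C.Obj)
    (R : C.Hom C.unit (C.tObj ρb ρ)) (Rb : C.Hom C.unit (C.tObj ρ ρb)) : Prop :=
  C.Irreducible ρ ∧ C.ConjPair ρ ρb R Rb ∧
    C.comp (C.star R) R = C.comp (C.star Rb) Rb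

/-- A standard pair of conjugation operators for `ρ` and `ρb`:  a pair of
conjugation operators of the form `R = Σᵢ (W̄ᵢ × Wᵢ) ∘ Rᵢ`,
`R̄ = Σᵢ (Wᵢ × W̄ᵢ) ∘ R̄ᵢ` for decompositions `1_ρ = Σᵢ Wᵢ ∘ Wᵢ*`,
`1_ρ̄ = Σᵢ W̄ᵢ ∘ W̄ᵢ*` into isometries from irreducible objects `σᵢ` (with
conjugates `σ̄ᵢ`) and standard pairs `(Rᵢ, R̄ᵢ)` for the irreducible `σᵢ`. -/
def IsStandardPair (ρ ρb : C.Obj)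
    (R : C.Hom C.unit (C.tObj ρb ρ)) (Rb : C.Hom C.unit (C.tObj ρ ρb)) : Prop :=
  C.ConjPair ρ ρb R Rb ∧
  ∃ (n : ℕ) (σ σb : Fin n → C.Obj)
    (W : ∀ i, C.Hom (σ i) ρ) (Wb : ∀ i, C.Hom (σb i) ρb)
    (Ri : ∀ i, C.Hom C.unit (C.tObj (σb i) (σ i)))
    (Rbi : ∀ i, C.Hom C.unit (C.tObj (σ i) (σb i))),
    (∀ i, C.IsIsometry (W i)) ∧ (∀ i, C.IsIsometry (Wb i)) ∧
    (∑ i, C.comp (W i) (C.star (W i))) = C.id ρ ∧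
    (∑ i, C.comp (Wb i) (C.star (Wb i))) = C.id ρb ∧
    (∀ i, C.IsStandardPairIrr (σ i) (σb i) (Ri i) (Rbi i)) ∧
    R = ∑ i, C.comp (C.tHom (Wb i) (W i)) (Ri i) ∧
    Rb = ∑ i, C.comp (C.tHom (W i) (Wb i)) (Rbi i)

end StrictCTC

set_option maxHeartbeats 1000000

namespace StrictCTC

variable {C : StrictCTC}

/-- Transport of a morphism along equalities of its domain and codomain. -/
def co {ρ σ ρ' σ' : C.Obj} (h : ρ = ρ') (k : σ = σ') (f : C.Hom ρ σ) : C.Hom ρ' σ' :=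
  h ▸ k ▸ f

@[simp] theorem co_self {ρ σ : C.Obj} (h : ρ = ρ) (k : σ = σ) (f : C.Hom ρ σ) :
    co h k f = f := rfl

@[simp] theorem co_co {ρ σ ρ' σ' ρ'' σ'' : C.Obj}
    (h : ρ = ρ') (k : σ = σ') (h' : ρ' = ρ'') (k' : σ' = σ'') (f : C.Hom ρ σ) :
    co h' k' (co h k f) = co (h.trans h') (k.trans k') f := by
  subst h k h' k'; rfl

theorem co_heq {ρ σ ρ' σ' : C.Obj} (h : ρ = ρ') (k : σ = σ') (f : C.Hom ρ σ) :
    HEq (co h k f) f := by subst h k; rfl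

theorem heq_iff_co_eq {ρ σ ρ' σ' : C.Obj} {h : ρ = ρ'} {k : σ = σ'}
    {f : C.Hom ρ σ} {g : C.Hom ρ' σ'} : HEq f g ↔ co h k f = g := by
  subst h k; constructor
  · intro hh; exact eq_of_heq hh
  · intro hh; exact heq_of_eq hh

theorem co_eq_iff {ρ σ ρ' σ' : C.Obj} {h : ρ = ρ'} {k : σ = σ'}
    {f : C.Hom ρ σ} {g : C.Hom ρ' σ'} : co h k f = g ↔ f = co h.symm k.symm g := by
  subst h k; exact Iff.rfl

theorem eqHom_eq_co {ρ σ : C.Obj} (h : ρ = σ) : C.eqHom h = co rfl h (C.id ρ) := by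
  subst h; rfl

/- congruence lemmas -/
theorem hcomp {ρ σ τ ρ' σ' τ' : C.Obj} (hρ : ρ = ρ') (hσ : σ = σ') (hτ : τ = τ')
    {f : C.Hom σ τ} {f' : C.Hom σ' τ'} {g : C.Hom ρ σ} {g' : C.Hom ρ' σ'}
    (Hf : HEq f f') (Hg : HEq g g') : HEq (C.comp f g) (C.comp f' g') := by
  subst hρ hσ hτ; rw [eq_of_heq Hf, eq_of_heq Hg]

theorem htHom {ρ σ ρ' σ' τ υ τ' υ' : C.Obj}
    (h1 : ρ = τ) (h2 : σ = υ) (h3 : ρ' = τ') (h4 : σ' = υ')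
    {f : C.Hom ρ σ} {f' : C.Hom τ υ} {g : C.Hom ρ' σ'} {g' : C.Hom τ' υ'}
    (Hf : HEq f f') (Hg : HEq g g') : HEq (C.tHom f g) (C.tHom f' g') := by
  subst h1 h2 h3 h4; rw [eq_of_heq Hf, eq_of_heq Hg]

theorem hstar {ρ σ ρ' σ' : C.Obj} (h : ρ = ρ') (k : σ = σ')
    {f : C.Hom ρ σ} {f' : C.Hom ρ' σ'} (H : HEq f f') :
    HEq (C.star f) (C.star f') := by subst h k; rw [eq_of_heq H]

theorem hid {ρ ρ' : C.Obj} (h : ρ = ρ') : HEq (C.id ρ) (C.id ρ') := by subst h; rfl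

/- fusion lemmas -/
@[simp] theorem co_comp_co {ρ σ τ ρ' σ' τ' : C.Obj}
    (h : σ = σ') (k : τ = τ') (h' : ρ = ρ')
    (f : C.Hom σ τ) (g : C.Hom ρ σ) :
    C.comp (co h k f) (co h' h g) = co h' k (C.comp f g) := by
  subst h k h'; rfl

@[simp] theorem co_comp {ρ σ σ' τ : C.Obj} (h : σ = σ') (k : τ = τ)
    (f : C.Hom σ τ) (g : C.Hom ρ σ') :
    C.comp (co h k f) g = C.comp f (co rfl h.symm g) := by
  subst h; rfl

@[simp] theorem comp_co {ρ ρ' σ τ : C.Obj} (h : ρ = ρ') (k : σ = σ)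
    (f : C.Hom σ τ) (g : C.Hom ρ σ) :
    C.comp f (co h k g) = co h rfl (C.comp f g) := by
  subst h; rfl

@[simp] theorem co_comp_cod {ρ σ τ τ' : C.Obj} (k : τ = τ') (h : σ = σ)
    (f : C.Hom σ τ) (g : C.Hom ρ σ) :
    C.comp (co h k f) g = co rfl k (C.comp f g) := by
  subst k; rfl

@[simp] theorem star_co {ρ σ ρ' σ' : C.Obj} (h : ρ = ρ') (k : σ = σ')
    (f : C.Hom ρ σ) : C.star (co h k f) = co k h (C.star f) := by
  subst h k; rfl

theorem tHom_co_co {ρ₁ σ₁ ρ₂ σ₂ ρ₁' σ₁' ρ₂' σ₂' : C.Obj}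
    (h₁ : ρ₁ = ρ₁') (k₁ : σ₁ = σ₁') (h₂ : ρ₂ = ρ₂') (k₂ : σ₂ = σ₂')
    (H : C.tObj ρ₁ ρ₂ = C.tObj ρ₁' ρ₂') (K : C.tObj σ₁ σ₂ = C.tObj σ₁' σ₂')
    (f : C.Hom ρ₁ σ₁) (g : C.Hom ρ₂ σ₂) :
    C.tHom (co h₁ k₁ f) (co h₂ k₂ g) = co H K (C.tHom f g) := by
  subst h₁ k₁ h₂ k₂; rfl

theorem tHom_co_left {ρ₁ σ₁ ρ₂ σ₂ ρ₁' σ₁' : C.Obj}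
    (h₁ : ρ₁ = ρ₁') (k₁ : σ₁ = σ₁')
    (H : C.tObj ρ₁ ρ₂ = C.tObj ρ₁' ρ₂) (K : C.tObj σ₁ σ₂ = C.tObj σ₁' σ₂)
    (f : C.Hom ρ₁ σ₁) (g : C.Hom ρ₂ σ₂) :
    C.tHom (co h₁ k₁ f) g = co H K (C.tHom f g) := by
  subst h₁ k₁; rfl

theorem tHom_co_right {ρ₁ σ₁ ρ₂ σ₂ ρ₂' σ₂' : C.Obj}
    (h₂ : ρ₂ = ρ₂') (k₂ : σ₂ = σ₂')
    (H : C.tObj ρ₁ ρ₂ = C.tObj ρ₁ ρ₂') (K : C.tObj σ₁ σ₂ = C.tObj σ₁ σ₂')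
    (f : C.Hom ρ₁ σ₁) (g : C.Hom ρ₂ σ₂) :
    C.tHom f (co h₂ k₂ g) = co H K (C.tHom f g) := by
  subst h₂ k₂; rfl

@[simp] theorem co_smul {ρ σ ρ' σ' : C.Obj} (h : ρ = ρ') (k : σ = σ') (c : ℂ)
    (f : C.Hom ρ σ) : co h k (c • f) = c • co h k f := by subst h k; rfl

@[simp] theorem co_add {ρ σ ρ' σ' : C.Obj} (h : ρ = ρ') (k : σ = σ')
    (f g : C.Hom ρ σ) : co h k (f + g) = co h k f + co h k g := by subst h k; rfl

@[simp] theorem co_zero {ρ σ ρ' σ' : C.Obj} (h : ρ = ρ') (k : σ = σ') :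
    co h k (0 : C.Hom ρ σ) = 0 := by subst h k; rfl

theorem co_sum {ρ σ ρ' σ' : C.Obj} (h : ρ = ρ') (k : σ = σ') {n : ℕ}
    (f : Fin n → C.Hom ρ σ) : co h k (∑ i, f i) = ∑ i, co h k (f i) := by
  subst h k; rfl

@[simp] theorem co_id {ρ ρ' : C.Obj} (h h' : ρ = ρ') :
    co h h' (C.id ρ) = C.id ρ' := by subst h; rfl

theorem co_eq_zero_iff {ρ σ ρ' σ' : C.Obj} (h : ρ = ρ') (k : σ = σ')
    (f : C.Hom ρ σ) : co h k f = 0 ↔ f = 0 := by subst h k; exact Iff.rfl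

end StrictCTC

namespace StrictCTC

scoped infixr:80 " ⊚ " => StrictCTC.comp _
scoped infixr:85 " ⊗̂ " => StrictCTC.tHom _
scoped infixr:75 " ⊙ " => StrictCTC.tObj _
scoped postfix:max "†" => StrictCTC.star _
scoped notation "𝟙 " ρ:max => StrictCTC.id _ ρ

variable {C : StrictCTC}

section Linear

/-- comp as an additive map in each variable. -/
theorem comp_zero {ρ σ τ : C.Obj} (f : C.Hom σ τ) : f ⊚ (0 : C.Hom ρ σ) = 0 := by
  rw [← zero_smul ℂ (0 : C.Hom ρ σ), C.comp_smul_right, zero_smul]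

theorem zero_comp {ρ σ τ : C.Obj} (g : C.Hom ρ σ) : (0 : C.Hom σ τ) ⊚ g = 0 := by
  rw [← zero_smul ℂ (0 : C.Hom σ τ), C.comp_smul_left, zero_smul]

theorem tHom_zero_left {ρ σ ρ' σ' : C.Obj} (g : C.Hom ρ' σ') :
    (0 : C.Hom ρ σ) ⊗̂ g = 0 := by
  rw [← zero_smul ℂ (0 : C.Hom ρ σ), C.tHom_smul_left, zero_smul]

theorem tHom_zero_right {ρ σ ρ' σ' : C.Obj} (f : C.Hom ρ σ) :
    f ⊗̂ (0 : C.Hom ρ' σ') = 0 := by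
  rw [← zero_smul ℂ (0 : C.Hom ρ' σ'), C.tHom_smul_right, zero_smul]

theorem star_zero' {ρ σ : C.Obj} : (0 : C.Hom ρ σ)† = 0 := by
  rw [← zero_smul ℂ (0 : C.Hom ρ σ), C.star_smul, map_zero, zero_smul]

theorem comp_sum {ρ σ τ : C.Obj} {n : ℕ} (f : C.Hom σ τ) (g : Fin n → C.Hom ρ σ) :
    f ⊚ (∑ i, g i) = ∑ i, f ⊚ g i :=
  map_sum (AddMonoidHom.mk' (fun x => f ⊚ x) (C.comp_add_right f)) g Finset.univ

theorem sum_comp {ρ σ τ : C.Obj} {n : ℕ} (f : Fin n → C.Hom σ τ) (g : C.Hom ρ σ) :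
    (∑ i, f i) ⊚ g = ∑ i, f i ⊚ g :=
  map_sum (AddMonoidHom.mk' (fun x => x ⊚ g) (fun a b => C.comp_add_left a b g)) f Finset.univ

theorem tHom_sum_left {ρ σ ρ' σ' : C.Obj} {n : ℕ} (f : Fin n → C.Hom ρ σ) (g : C.Hom ρ' σ') :
    (∑ i, f i) ⊗̂ g = ∑ i, f i ⊗̂ g :=
  map_sum (AddMonoidHom.mk' (fun x => x ⊗̂ g) (fun a b => C.tHom_add_left a b g)) f Finset.univ

theorem tHom_sum_right {ρ σ ρ' σ' : C.Obj} {n : ℕ} (f : C.Hom ρ σ) (g : Fin n → C.Hom ρ' σ') :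
    f ⊗̂ (∑ i, g i) = ∑ i, f ⊗̂ g i :=
  map_sum (AddMonoidHom.mk' (fun x => f ⊗̂ x) (C.tHom_add_right f)) g Finset.univ

theorem star_sum {ρ σ : C.Obj} {n : ℕ} (f : Fin n → C.Hom ρ σ) :
    (∑ i, f i)† = ∑ i, (f i)† :=
  map_sum (AddMonoidHom.mk' (fun x : C.Hom ρ σ => x†) C.star_add) f Finset.univ

theorem norm_id {ρ : C.Obj} : ‖(𝟙 ρ : C.Hom ρ ρ)‖ = 1 := by
  have h := C.cstar_norm (𝟙 ρ)
  rw [C.star_id, C.comp_id] at h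
  have hne : ‖(𝟙 ρ : C.Hom ρ ρ)‖ ≠ 0 := by
    simpa [norm_eq_zero] using C.id_ne_zero ρ
  exact (mul_left_cancel₀ hne (by rw [mul_one, ← pow_two, ← h])).symm

theorem smul_cancel {ρ σ : C.Obj} {c c' : ℂ} {f : C.Hom ρ σ} (hf : f ≠ 0)
    (h : c • f = c' • f) : c = c' := by
  by_contra hcc
  have h2 : (c - c') • f = 0 := by rw [sub_smul, h, sub_self]
  rcases smul_eq_zero.mp h2 with h3 | h3
  · exact hcc (sub_eq_zero.mp h3)
  · exact hf h3

theorem scalar_unique {ρ : C.Obj} {c c' : ℂ} (h : c • (𝟙 ρ : C.Hom ρ ρ) = c' • 𝟙 ρ) :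
    c = c' := smul_cancel (C.id_ne_zero ρ) h

theorem star_smul_id {ρ : C.Obj} (c : ℂ) : (c • (𝟙 ρ : C.Hom ρ ρ))† = (starRingEnd ℂ c) • 𝟙 ρ := by
  rw [C.star_smul, C.star_id]

end Linear

section Interchange

theorem comp_tHom_id_right {ρ σ τ m : C.Obj} (f : C.Hom σ τ) (g : C.Hom ρ σ) :
    (f ⊗̂ (𝟙 m)) ⊚ (g ⊗̂ (𝟙 m)) = (f ⊚ g) ⊗̂ (𝟙 m) := by
  rw [C.interchange, C.comp_id]

theorem comp_tHom_id_left {ρ σ τ m : C.Obj} (f : C.Hom σ τ) (g : C.Hom ρ σ) :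
    ((𝟙 m) ⊗̂ f) ⊚ ((𝟙 m) ⊗̂ g) = (𝟙 m) ⊗̂ (f ⊚ g) := by
  rw [C.interchange, C.comp_id]

theorem exch_lr {ρ ρ' σ σ' : C.Obj} (f : C.Hom ρ ρ') (g : C.Hom σ σ') :
    (f ⊗̂ (𝟙 σ')) ⊚ ((𝟙 ρ) ⊗̂ g) = f ⊗̂ g := by
  rw [C.interchange, C.comp_id, C.id_comp]

theorem exch_rl {ρ ρ' σ σ' : C.Obj} (f : C.Hom ρ ρ') (g : C.Hom σ σ') :
    ((𝟙 ρ') ⊗̂ g) ⊚ (f ⊗̂ (𝟙 σ)) = f ⊗̂ g := by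
  rw [C.interchange, C.comp_id, C.id_comp]

/-- right-associated form of a doubly-tensored morphism. -/
theorem tHom_assoc' {ρ ρ' σ σ' τ τ' : C.Obj}
    (f : C.Hom ρ ρ') (g : C.Hom σ σ') (h : C.Hom τ τ') :
    (f ⊗̂ g) ⊗̂ h =
      co (C.tObj_assoc ρ σ τ) (C.tObj_assoc ρ' σ' τ') (f ⊗̂ (g ⊗̂ h)) :=
  heq_iff_co_eq.mp (C.tHom_assoc f g h) |>.symm

theorem unit_tHom' {ρ σ : C.Obj} (f : C.Hom ρ σ) :
    (𝟙 (C.unit)) ⊗̂ f = co (C.unit_tObj ρ).symm (C.unit_tObj σ).symm f := by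
  have := heq_iff_co_eq (h := C.unit_tObj ρ) (k := C.unit_tObj σ) |>.mp (C.id_unit_tHom f)
  rwa [co_eq_iff] at this

theorem tHom_unit' {ρ σ : C.Obj} (f : C.Hom ρ σ) :
    f ⊗̂ (𝟙 (C.unit)) = co (C.tObj_unit ρ).symm (C.tObj_unit σ).symm f := by
  have := heq_iff_co_eq (h := C.tObj_unit ρ) (k := C.tObj_unit σ) |>.mp (C.tHom_id_unit f)
  rwa [co_eq_iff] at this

end Interchange

end StrictCTC

namespace StrictCTC

variable {C : StrictCTC}

section Ops

variable {m n x ρ σ τ μ ν : C.Obj}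

/-- Insert a created object on the right: `1_ρ ⊗ a` with the unit cast. -/
def ir (a : C.Hom C.unit m) (ρ : C.Obj) : C.Hom ρ (ρ ⊙ m) :=
  co (C.tObj_unit ρ) rfl ((𝟙 ρ) ⊗̂ a)

/-- Insert a created object on the left. -/
def il (a : C.Hom C.unit m) (ρ : C.Obj) : C.Hom ρ (m ⊙ ρ) :=
  co (C.unit_tObj ρ) rfl (a ⊗̂ (𝟙 ρ))

/-- Annihilate on the right: `1_ρ ⊗ a†` with the unit cast. -/
def kr (a : C.Hom C.unit m) (ρ : C.Obj) : C.Hom (ρ ⊙ m) ρ :=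
  co rfl (C.tObj_unit ρ) ((𝟙 ρ) ⊗̂ a†)

/-- Annihilate on the left. -/
def kl (a : C.Hom C.unit m) (ρ : C.Obj) : C.Hom (m ⊙ ρ) ρ :=
  co rfl (C.unit_tObj ρ) (a† ⊗̂ (𝟙 ρ))

@[simp] theorem star_ir (a : C.Hom C.unit m) (ρ : C.Obj) : (ir a ρ)† = kr a ρ := by
  unfold ir kr
  rw [star_co, C.star_tHom, C.star_id]

@[simp] theorem star_il (a : C.Hom C.unit m) (ρ : C.Obj) : (il a ρ)† = kl a ρ := by
  unfold il kl
  rw [star_co, C.star_tHom, C.star_id]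

@[simp] theorem star_kr (a : C.Hom C.unit m) (ρ : C.Obj) : (kr a ρ)† = ir a ρ := by
  unfold ir kr
  rw [star_co, C.star_tHom, C.star_id, C.star_star]

@[simp] theorem star_kl (a : C.Hom C.unit m) (ρ : C.Obj) : (kl a ρ)† = il a ρ := by
  unfold il kl
  rw [star_co, C.star_tHom, C.star_id, C.star_star]

/-- Fusing a tensor layer into a right insertion. -/
theorem tHom_comp_ir (h : C.Hom ρ σ) (k : C.Hom m n) (a : C.Hom C.unit m) :
    (h ⊗̂ k) ⊚ ir a ρ = co (C.tObj_unit ρ) rfl (h ⊗̂ (k ⊚ a)) := by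
  unfold ir
  rw [comp_co, C.interchange, C.comp_id]

theorem tHom_comp_il (h : C.Hom ρ σ) (k : C.Hom m n) (a : C.Hom C.unit m) :
    (k ⊗̂ h) ⊚ il a ρ = co (C.unit_tObj ρ) rfl ((k ⊚ a) ⊗̂ h) := by
  unfold il
  rw [comp_co, C.interchange, C.comp_id]

theorem kr_comp_tHom (h : C.Hom ρ σ) (k : C.Hom n m) (a : C.Hom C.unit m) :
    kr a σ ⊚ (h ⊗̂ k) = co rfl (C.tObj_unit σ) (h ⊗̂ (a† ⊚ k)) := by
  unfold kr
  rw [co_comp_cod, C.interchange, C.id_comp]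

theorem kl_comp_tHom (h : C.Hom ρ σ) (k : C.Hom n m) (a : C.Hom C.unit m) :
    kl a σ ⊚ (k ⊗̂ h) = co rfl (C.unit_tObj σ) ((a† ⊚ k) ⊗̂ h) := by
  unfold kl
  rw [co_comp_cod, C.interchange, C.id_comp]

/-- Naturality of the insertion/annihilation operators. -/
theorem ir_nat (a : C.Hom C.unit m) (f : C.Hom ρ σ) :
    (f ⊗̂ (𝟙 m)) ⊚ ir a ρ = ir a σ ⊚ f := by
  rw [tHom_comp_ir, C.id_comp]
  have hf : f = co (C.tObj_unit ρ) (C.tObj_unit σ) (f ⊗̂ (𝟙 (C.unit))) := by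
    rw [tHom_unit', co_co, co_self]
  conv_rhs => rw [hf]
  unfold ir
  rw [co_comp_co, C.interchange, C.id_comp, C.comp_id]

theorem il_nat (a : C.Hom C.unit m) (f : C.Hom ρ σ) :
    ((𝟙 m) ⊗̂ f) ⊚ il a ρ = il a σ ⊚ f := by
  rw [tHom_comp_il, C.id_comp]
  have hf : f = co (C.unit_tObj ρ) (C.unit_tObj σ) ((𝟙 (C.unit)) ⊗̂ f) := by
    rw [unit_tHom', co_co, co_self]
  conv_rhs => rw [hf]
  unfold il
  rw [co_comp_co, C.interchange, C.id_comp, C.comp_id]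

theorem kr_nat (a : C.Hom C.unit m) (f : C.Hom ρ σ) :
    kr a σ ⊚ (f ⊗̂ (𝟙 m)) = f ⊚ kr a ρ := by
  rw [kr_comp_tHom]
  have hf : f = co (C.tObj_unit ρ) (C.tObj_unit σ) (f ⊗̂ (𝟙 (C.unit))) := by
    rw [tHom_unit', co_co, co_self]
  conv_rhs => rw [hf]
  unfold kr
  rw [co_comp_co, C.interchange]
  simp only [C.comp_id, C.id_comp]

theorem kl_nat (a : C.Hom C.unit m) (f : C.Hom ρ σ) :
    kl a σ ⊚ ((𝟙 m) ⊗̂ f) = f ⊚ kl a ρ := by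
  rw [kl_comp_tHom]
  have hf : f = co (C.unit_tObj ρ) (C.unit_tObj σ) ((𝟙 (C.unit)) ⊗̂ f) := by
    rw [unit_tHom', co_co, co_self]
  conv_rhs => rw [hf]
  unfold kl
  rw [co_comp_co, C.interchange]
  simp only [C.comp_id, C.id_comp]

/-- Decoration of the created object. -/
theorem ir_deco (a : C.Hom C.unit m) (k : C.Hom m n) (ρ : C.Obj) :
    ir (k ⊚ a) ρ = ((𝟙 ρ) ⊗̂ k) ⊚ ir a ρ := by
  rw [tHom_comp_ir]; rfl

theorem il_deco (a : C.Hom C.unit m) (k : C.Hom m n) (ρ : C.Obj) :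
    il (k ⊚ a) ρ = (k ⊗̂ (𝟙 ρ)) ⊚ il a ρ := by
  rw [tHom_comp_il]; rfl

theorem kr_deco (a : C.Hom C.unit m) (k : C.Hom m n) (ρ : C.Obj) :
    kr (k ⊚ a) ρ = kr a ρ ⊚ ((𝟙 ρ) ⊗̂ k†) := by
  rw [kr_comp_tHom]
  unfold kr
  rw [C.star_comp]

theorem kl_deco (a : C.Hom C.unit m) (k : C.Hom m n) (ρ : C.Obj) :
    kl (k ⊚ a) ρ = kl a ρ ⊚ (k† ⊗̂ (𝟙 ρ)) := by
  rw [kl_comp_tHom]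
  unfold kl
  rw [C.star_comp]

/-- Two successive creations. -/
theorem ir_comp_creation (a : C.Hom C.unit m) (b : C.Hom C.unit n) :
    ir b m ⊚ a = co (C.unit_tObj C.unit) rfl (a ⊗̂ b) := by
  have ha : a = co (C.tObj_unit C.unit) (C.tObj_unit m) (a ⊗̂ (𝟙 (C.unit))) := by
    rw [tHom_unit', co_co, co_self]
  conv_lhs => rw [ha]
  unfold ir
  rw [co_comp_co, C.interchange]
  simp only [C.comp_id, C.id_comp]

theorem il_comp_creation (a : C.Hom C.unit m) (b : C.Hom C.unit n) :
    il a n ⊚ b = co (C.unit_tObj C.unit) rfl (a ⊗̂ b) := by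
  have hb : b = co (C.unit_tObj C.unit) (C.unit_tObj n) ((𝟙 (C.unit)) ⊗̂ b) := by
    rw [unit_tHom', co_co, co_self]
  conv_lhs => rw [hb]
  unfold il
  rw [co_comp_co, C.interchange]
  simp only [C.comp_id, C.id_comp]

/-- reassociating a right insertion. -/
theorem ir_assoc (a : C.Hom C.unit m) (x ρ : C.Obj) :
    (𝟙 x) ⊗̂ ir a ρ = co rfl (C.tObj_assoc x ρ m).symm (ir a (x ⊙ ρ)) := by
  unfold ir
  rw [tHom_co_right (H := by rw [C.tObj_unit]) (K := rfl), ← C.tHom_id x ρ,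
    tHom_assoc', co_co, co_co]

theorem il_assoc (a : C.Hom C.unit m) (ρ x : C.Obj) :
    il a ρ ⊗̂ (𝟙 x) = co rfl (C.tObj_assoc m ρ x) (il a (ρ ⊙ x)) := by
  unfold il
  rw [tHom_co_left (H := by rw [C.unit_tObj]) (K := rfl), ← C.tHom_id ρ x,
    tHom_assoc', co_co, co_co]

/-- annihilating a middle pair from either grouping. -/
theorem kill_cross (b : C.Hom C.unit m) (x ν : C.Obj) :
    co (C.tObj_assoc x m ν).symm rfl ((kr b x) ⊗̂ (𝟙 ν))
      = (𝟙 x) ⊗̂ (kl b ν) := by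
  apply eq_of_heq
  refine (co_heq _ _ _).trans ?_
  unfold kr kl
  refine (htHom rfl (by rw [C.tObj_unit]) rfl rfl (co_heq _ _ _) (HEq.refl _)).trans ?_
  refine ((C.tHom_assoc (𝟙 x) (b†) (𝟙 ν)).symm).trans ?_
  exact htHom rfl rfl rfl (by rw [C.unit_tObj]) (HEq.refl _) (co_heq _ _ _).symm

end Ops

section Hooks

variable {x ρ σ τ μ ν δ : C.Obj}

/-- `(b† ⊗ 1)∘assoc∘(1 ⊗ a)` : insert `a : ι → μ ⊙ ν` on the right of `ρ`,
then annihilate `b : ι → ρ ⊙ μ` on the left.  A morphism `ρ → ν`. -/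
def hookR (a : C.Hom C.unit (μ ⊙ ν)) (b : C.Hom C.unit (ρ ⊙ μ)) : C.Hom ρ ν :=
  kl b ν ⊚ co rfl (C.tObj_assoc ρ μ ν) (ir a ρ)

/-- `(1 ⊗ b†)∘assoc⁻¹∘(a ⊗ 1)` : insert `a : ι → μ ⊙ ν` on the left of `σ`,
then annihilate `b : ι → ν ⊙ σ` on the right.  A morphism `σ → μ`. -/
def hookL (a : C.Hom C.unit (μ ⊙ ν)) (b : C.Hom C.unit (ν ⊙ σ)) : C.Hom σ μ :=
  kr b μ ⊚ co rfl (C.tObj_assoc μ ν σ).symm (il a σ)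

theorem star_hookR (a : C.Hom C.unit (μ ⊙ ν)) (b : C.Hom C.unit (ρ ⊙ μ)) :
    (hookR a b)† = hookL b a := by
  unfold hookR hookL
  rw [C.star_comp, star_co, star_ir, star_kl, co_comp]

theorem star_hookL (a : C.Hom C.unit (μ ⊙ ν)) (b : C.Hom C.unit (ν ⊙ σ)) :
    (hookL a b)† = hookR b a := by
  unfold hookR hookL
  rw [C.star_comp, star_co, star_il, star_kr, co_comp]

end Hooks

end StrictCTC

namespace StrictCTC

variable {C : StrictCTC}

/-- fully general fusion of two casts around a composition. -/
theorem co_comp_co₂ {ρ₀ ρ' σ₀ σ₁ σ' τ₀ τ' : C.Obj}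
    (h : σ₀ = σ') (k : τ₀ = τ') (h' : ρ₀ = ρ') (k' : σ₁ = σ')
    (f : C.Hom σ₀ τ₀) (g : C.Hom ρ₀ σ₁) :
    C.comp (co h k f) (co h' k' g)
      = co h' k (C.comp f (co rfl (k'.trans h.symm) g)) := by
  subst h k h'
  subst k'
  rfl

theorem comp_co_split {ρ₀ ρ' σ₀ σ₁ τ : C.Obj}
    (h : ρ₀ = ρ') (k : σ₁ = σ₀) (f : C.Hom σ₀ τ) (g : C.Hom ρ₀ σ₁) :
    C.comp f (co h k g) = co h rfl (C.comp f (co rfl k g)) := by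
  subst h; rfl

section Masters

variable {x ρ σ τ μ ν : C.Obj}

theorem master1 (a : C.Hom C.unit (μ ⊙ ν)) (b : C.Hom C.unit (ρ ⊙ μ))
    (c : C.Hom C.unit (x ⊙ ρ)) :
    ((𝟙 x) ⊗̂ hookR a b) ⊚ c = ((hookL c b) ⊗̂ (𝟙 ν)) ⊚ a := by
  have l1 : (𝟙 x) ⊗̂ (hookR a b)
      = ((𝟙 x) ⊗̂ kl b ν) ⊚ co rfl (congrArg (C.tObj x) (C.tObj_assoc ρ μ ν))
          ((𝟙 x) ⊗̂ ir a ρ) := by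
    unfold hookR
    rw [← comp_tHom_id_left,
      tHom_co_right rfl (C.tObj_assoc ρ μ ν) rfl
        (congrArg (C.tObj x) (C.tObj_assoc ρ μ ν)) (𝟙 x) (ir a ρ)]
  rw [l1, ir_assoc, co_co, C.comp_assoc, co_comp_cod, ir_comp_creation, co_co,
    ← kill_cross b x ν,
    co_comp_co₂]
  -- RHS
  have r1 : (hookL c b) ⊗̂ (𝟙 ν)
      = ((kr b x) ⊗̂ (𝟙 ν)) ⊚ co rfl (congrArg (fun z => z ⊙ ν) (C.tObj_assoc x ρ μ).symm)
          ((il c μ) ⊗̂ (𝟙 ν)) := by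
    unfold hookL
    rw [← comp_tHom_id_right,
      tHom_co_left rfl (C.tObj_assoc x ρ μ).symm rfl
        (congrArg (fun z => z ⊙ ν) (C.tObj_assoc x ρ μ).symm) (il c μ) (𝟙 ν)]
  conv_rhs => rw [r1, il_assoc, co_co, C.comp_assoc, co_comp_cod, il_comp_creation, co_co,
    comp_co_split]

theorem master2 (a : C.Hom C.unit (μ ⊙ ν)) (b : C.Hom C.unit (ν ⊙ σ))
    (c : C.Hom C.unit (σ ⊙ x)) :
    ((hookL a b) ⊗̂ (𝟙 x)) ⊚ c = ((𝟙 μ) ⊗̂ hookR c b) ⊚ a := by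
  have l1 : (hookL a b) ⊗̂ (𝟙 x)
      = ((kr b μ) ⊗̂ (𝟙 x)) ⊚ co rfl (congrArg (fun z => z ⊙ x) (C.tObj_assoc μ ν σ).symm)
          ((il a σ) ⊗̂ (𝟙 x)) := by
    unfold hookL
    rw [← comp_tHom_id_right,
      tHom_co_left rfl (C.tObj_assoc μ ν σ).symm rfl
        (congrArg (fun z => z ⊙ x) (C.tObj_assoc μ ν σ).symm) (il a σ) (𝟙 x)]
  rw [l1, il_assoc, co_co, C.comp_assoc, co_comp_cod, il_comp_creation, co_co]
  have r1 : (𝟙 μ) ⊗̂ (hookR c b)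
      = ((𝟙 μ) ⊗̂ kl b x) ⊚ co rfl (congrArg (C.tObj μ) (C.tObj_assoc ν σ x))
          ((𝟙 μ) ⊗̂ ir c ν) := by
    unfold hookR
    rw [← comp_tHom_id_left,
      tHom_co_right rfl (C.tObj_assoc ν σ x) rfl
        (congrArg (C.tObj μ) (C.tObj_assoc ν σ x)) (𝟙 μ) (ir c ν)]
  conv_rhs => rw [r1, ir_assoc, co_co, C.comp_assoc, co_comp_cod, ir_comp_creation, co_co,
    ← kill_cross b μ x, co_comp_co₂]
  rw [comp_co_split]

end Masters

end StrictCTC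

namespace StrictCTC

variable {C : StrictCTC}

section AssocPush

variable {d₁ d₂ d₃ c₁ c₂ c₃ δ : C.Obj}

theorem assoc_push (f₁ : C.Hom d₁ c₁) (f₂ : C.Hom d₂ c₂) (f₃ : C.Hom d₃ c₃)
    (X : C.Hom δ (d₁ ⊙ (d₂ ⊙ d₃))) :
    ((f₁ ⊗̂ f₂) ⊗̂ f₃) ⊚ co rfl (C.tObj_assoc d₁ d₂ d₃) X
      = co rfl (C.tObj_assoc c₁ c₂ c₃) ((f₁ ⊗̂ (f₂ ⊗̂ f₃)) ⊚ X) := by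
  rw [tHom_assoc', co_comp_co₂, co_self]

theorem assoc_pull (f₁ : C.Hom d₁ c₁) (f₂ : C.Hom d₂ c₂) (f₃ : C.Hom d₃ c₃)
    (X : C.Hom δ ((d₁ ⊙ d₂) ⊙ d₃)) :
    (f₁ ⊗̂ (f₂ ⊗̂ f₃)) ⊚ co rfl (C.tObj_assoc d₁ d₂ d₃).symm X
      = co rfl (C.tObj_assoc c₁ c₂ c₃).symm (((f₁ ⊗̂ f₂) ⊗̂ f₃) ⊚ X) := by
  have h := assoc_push f₁ f₂ f₃ (co rfl (C.tObj_assoc d₁ d₂ d₃).symm X)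
  rw [co_co, co_self] at h
  rw [h, co_co, co_self]

end AssocPush

section Deco

variable {x ρ σ τ μ ν ρ₀ σ₀ μ₀ ν₀ : C.Obj}

/-- decoration in the `ν` slot of the first argument of `hookR` pulls out. -/
theorem hookR_deco_ν (g : C.Hom ν₀ ν) (a : C.Hom C.unit (μ ⊙ ν₀)) (b : C.Hom C.unit (ρ ⊙ μ)) :
    hookR (((𝟙 μ) ⊗̂ g) ⊚ a) b = g ⊚ hookR a b := by
  unfold hookR
  rw [ir_deco, ← assoc_push, C.tHom_id, ← C.comp_assoc, kl_nat, C.comp_assoc]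

/-- decoration in the `μ` slot of the first argument of `hookR` moves to the second. -/
theorem hookR_deco_μ (f : C.Hom μ₀ μ) (a : C.Hom C.unit (μ₀ ⊙ ν)) (b : C.Hom C.unit (ρ ⊙ μ)) :
    hookR ((f ⊗̂ (𝟙 ν)) ⊚ a) b = hookR a (((𝟙 ρ) ⊗̂ f†) ⊚ b) := by
  unfold hookR
  rw [ir_deco, ← assoc_push, ← C.comp_assoc, kl_deco, C.star_tHom, C.star_id, C.star_star]

/-- decoration in the `μ` slot of the first argument of `hookL` pulls out. -/
theorem hookL_deco_μ (f : C.Hom μ₀ μ) (a : C.Hom C.unit (μ₀ ⊙ ν)) (b : C.Hom C.unit (ν ⊙ σ)) :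
    hookL ((f ⊗̂ (𝟙 ν)) ⊚ a) b = f ⊚ hookL a b := by
  unfold hookL
  rw [il_deco, ← assoc_pull, C.tHom_id, ← C.comp_assoc, kr_nat, C.comp_assoc]

/-- decoration in the `ν` slot of the first argument of `hookL` moves to the second. -/
theorem hookL_deco_ν (g : C.Hom ν₀ ν) (a : C.Hom C.unit (μ ⊙ ν₀)) (b : C.Hom C.unit (ν ⊙ σ)) :
    hookL (((𝟙 μ) ⊗̂ g) ⊚ a) b = hookL a ((g† ⊗̂ (𝟙 σ)) ⊚ b) := by
  unfold hookL
  rw [il_deco, ← assoc_pull, ← C.comp_assoc, kr_deco, C.star_tHom, C.star_star, C.star_id]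

/-- precomposition of `hookL` decorates its second argument. -/
theorem hookL_nat (a : C.Hom C.unit (μ ⊙ ν)) (b : C.Hom C.unit (ν ⊙ σ)) (f : C.Hom σ₀ σ) :
    hookL a b ⊚ f = hookL a (((𝟙 ν) ⊗̂ f†) ⊚ b) := by
  unfold hookL
  rw [C.comp_assoc, co_comp_cod, ← il_nat, ← C.tHom_id μ ν, ← assoc_pull, ← C.comp_assoc,
    kr_deco, C.star_tHom, C.star_star, C.star_id]

/-- precomposition of `hookR` decorates its second argument. -/
theorem hookR_nat (a : C.Hom C.unit (μ ⊙ ν)) (b : C.Hom C.unit (ρ ⊙ μ)) (f : C.Hom ρ₀ ρ) :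
    hookR a b ⊚ f = hookR a ((f† ⊗̂ (𝟙 μ)) ⊚ b) := by
  unfold hookR
  rw [C.comp_assoc, co_comp_cod, ← ir_nat, ← C.tHom_id μ ν, ← assoc_push, ← C.comp_assoc,
    kl_deco, C.star_tHom, C.star_star, C.star_id]

end Deco

end StrictCTC

namespace StrictCTC

variable {C : StrictCTC}

section EqHomFusion

@[simp] theorem comp_co_id {ρ σ' τ : C.Obj} (k : ρ = σ') (f : C.Hom σ' τ) :
    f ⊚ (co rfl k (𝟙 ρ)) = co k.symm rfl f := by
  subst k; rw [co_self, co_self, C.comp_id]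

@[simp] theorem co_id_comp {ρ σ τ' : C.Obj} (k : σ = τ') (f : C.Hom ρ σ) :
    (co rfl k (𝟙 σ)) ⊚ f = co rfl k f := by
  subst k; rw [co_self, co_self, C.id_comp]

end EqHomFusion

section ConjIff

variable {ρ ρb : C.Obj}

theorem conjPair_iff {R : C.Hom C.unit (ρb ⊙ ρ)} {Rb : C.Hom C.unit (ρ ⊙ ρb)} :
    C.ConjPair ρ ρb R Rb ↔ (hookR R Rb = 𝟙 ρ ∧ hookR Rb R = 𝟙 ρb) := by
  unfold ConjPair hookR kl ir
  rw [eqHom_eq_co, eqHom_eq_co, eqHom_eq_co, eqHom_eq_co, eqHom_eq_co, eqHom_eq_co,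
    comp_co_id, comp_co_id, co_id_comp, co_id_comp, co_id_comp, co_id_comp,
    co_co, co_co, co_comp_cod, co_comp_cod]

end ConjIff

section HookLinear

variable {x ρ σ τ μ ν : C.Obj} {n : ℕ}

theorem kl_zero (ρ : C.Obj) : kl (0 : C.Hom C.unit μ) ρ = 0 := by
  unfold kl; rw [star_zero', tHom_zero_left, co_zero]

theorem kr_zero (ρ : C.Obj) : kr (0 : C.Hom C.unit μ) ρ = 0 := by
  unfold kr; rw [star_zero', tHom_zero_right, co_zero]

theorem hookR_zero_b (a : C.Hom C.unit (μ ⊙ ν)) :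
    hookR a (0 : C.Hom C.unit (ρ ⊙ μ)) = 0 := by
  unfold hookR; rw [kl_zero, zero_comp]

theorem hookL_zero_b (a : C.Hom C.unit (μ ⊙ ν)) :
    hookL a (0 : C.Hom C.unit (ν ⊙ σ)) = 0 := by
  unfold hookL; rw [kr_zero, zero_comp]

theorem hookR_smul_a (c : ℂ) (a : C.Hom C.unit (μ ⊙ ν)) (b : C.Hom C.unit (ρ ⊙ μ)) :
    hookR (c • a) b = c • hookR a b := by
  unfold hookR ir
  rw [C.tHom_smul_right, co_smul, co_smul, C.comp_smul_right]

theorem hookL_smul_a (c : ℂ) (a : C.Hom C.unit (μ ⊙ ν)) (b : C.Hom C.unit (ν ⊙ σ)) :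
    hookL (c • a) b = c • hookL a b := by
  unfold hookL il
  rw [C.tHom_smul_left, co_smul, co_smul, C.comp_smul_right]

theorem hookR_smul_b (c : ℂ) (a : C.Hom C.unit (μ ⊙ ν)) (b : C.Hom C.unit (ρ ⊙ μ)) :
    hookR a (c • b) = (starRingEnd ℂ c) • hookR a b := by
  unfold hookR kl
  rw [C.star_smul, C.tHom_smul_left, co_smul, C.comp_smul_left]

theorem hookL_smul_b (c : ℂ) (a : C.Hom C.unit (μ ⊙ ν)) (b : C.Hom C.unit (ν ⊙ σ)) :
    hookL a (c • b) = (starRingEnd ℂ c) • hookL a b := by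
  unfold hookL kr
  rw [C.star_smul, C.tHom_smul_right, co_smul, C.comp_smul_left]

theorem hookR_sum_a (a : Fin n → C.Hom C.unit (μ ⊙ ν)) (b : C.Hom C.unit (ρ ⊙ μ)) :
    hookR (∑ i, a i) b = ∑ i, hookR (a i) b := by
  unfold hookR ir
  rw [tHom_sum_right, co_sum, co_sum, comp_sum]

theorem hookL_sum_a (a : Fin n → C.Hom C.unit (μ ⊙ ν)) (b : C.Hom C.unit (ν ⊙ σ)) :
    hookL (∑ i, a i) b = ∑ i, hookL (a i) b := by
  unfold hookL il
  rw [tHom_sum_left, co_sum, co_sum, comp_sum]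

theorem hookR_sum_b (a : C.Hom C.unit (μ ⊙ ν)) (b : Fin n → C.Hom C.unit (ρ ⊙ μ)) :
    hookR a (∑ i, b i) = ∑ i, hookR a (b i) := by
  unfold hookR kl
  rw [star_sum, tHom_sum_left, co_sum, sum_comp]

theorem hookL_sum_b (a : C.Hom C.unit (μ ⊙ ν)) (b : Fin n → C.Hom C.unit (ν ⊙ σ)) :
    hookL a (∑ i, b i) = ∑ i, hookL a (b i) := by
  unfold hookL kr
  rw [star_sum, tHom_sum_right, co_sum, sum_comp]

end HookLinear

section DerivedDeco

variable {x ρ σ τ μ ν ρ₀ σ₀ μ₀ ν₀ : C.Obj}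

/-- full decomposition of a decorated second argument of `hookR`. -/
theorem hookR_b_deco (a : C.Hom C.unit (μ ⊙ ν)) (f' : C.Hom ρ₀ ρ) (g' : C.Hom μ₀ μ)
    (b₀ : C.Hom C.unit (ρ₀ ⊙ μ₀)) :
    hookR a ((f' ⊗̂ g') ⊚ b₀) = hookR ((g'† ⊗̂ (𝟙 ν)) ⊚ a) b₀ ⊚ f'† := by
  have h1 : (f' ⊗̂ g') ⊚ b₀ = (f' ⊗̂ (𝟙 μ)) ⊚ (((𝟙 ρ₀) ⊗̂ g') ⊚ b₀) := by
    rw [← C.comp_assoc, exch_lr]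
  rw [h1, show f' ⊗̂ (𝟙 μ) = (f'†)† ⊗̂ (𝟙 μ) by rw [C.star_star], ← hookR_nat,
    hookR_deco_μ, C.star_star]

/-- full decomposition of a decorated second argument of `hookL`. -/
theorem hookL_b_deco (a : C.Hom C.unit (μ ⊙ ν)) (f' : C.Hom ν₀ ν) (g' : C.Hom σ₀ σ)
    (b₀ : C.Hom C.unit (ν₀ ⊙ σ₀)) :
    hookL a ((f' ⊗̂ g') ⊚ b₀) = hookL (((𝟙 μ) ⊗̂ f'†) ⊚ a) b₀ ⊚ g'† := by
  have h1 : (f' ⊗̂ g') ⊚ b₀ = ((𝟙 ν) ⊗̂ g') ⊚ ((f' ⊗̂ (𝟙 σ₀)) ⊚ b₀) := by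
    rw [← C.comp_assoc, exch_rl]
  rw [h1, show (𝟙 ν) ⊗̂ g' = (𝟙 ν) ⊗̂ (g'†)† by rw [C.star_star], ← hookL_nat,
    hookL_deco_ν, C.star_star]

end DerivedDeco

end StrictCTC

namespace StrictCTC

variable {C : StrictCTC}

/-- The endomorphism algebra of an object, as a type synonym. -/
def Endo (C : StrictCTC) (ρ : C.Obj) : Type := C.Hom ρ ρ

namespace Endo

variable {ρ : C.Obj}

instance : NormedAddCommGroup (Endo C ρ) := C.normed ρ ρ
instance : Module ℂ (Endo C ρ) := (C.normedSpace ρ ρ).toModule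
instance : NormedSpace ℂ (Endo C ρ) := C.normedSpace ρ ρ
instance : CompleteSpace (Endo C ρ) := C.complete ρ ρ

instance : Mul (Endo C ρ) := ⟨fun a b => C.comp a b⟩
instance : One (Endo C ρ) := ⟨C.id ρ⟩

theorem mul_def (a b : Endo C ρ) : a * b = C.comp a b := rfl
theorem one_def : (1 : Endo C ρ) = C.id ρ := rfl

instance : Ring (Endo C ρ) :=
  { (inferInstance : AddCommGroup (C.Hom ρ ρ)) with
    mul_assoc := fun a b c => C.comp_assoc a b c
    one_mul := fun a => C.id_comp a
    mul_one := fun a => C.comp_id a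
    left_distrib := fun a b c => C.comp_add_right a b c
    right_distrib := fun a b c => C.comp_add_left a b c
    zero_mul := fun a => zero_comp a
    mul_zero := fun a => comp_zero a }

instance : StarRing (Endo C ρ) where
  star := C.star
  star_involutive := C.star_star
  star_mul := fun a b => C.star_comp a b
  star_add := C.star_add

theorem star_def (a : Endo C ρ) : Star.star a = C.star a := rfl

instance : Algebra ℂ (Endo C ρ) :=
  Algebra.ofModule (fun c a b => C.comp_smul_left c a b)
    (fun c a b => C.comp_smul_right c a b)

instance : StarModule ℂ (Endo C ρ) := ⟨fun c a => C.star_smul c a⟩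

instance : NormedRing (Endo C ρ) :=
  { (inferInstance : NormedAddCommGroup (C.Hom ρ ρ)),
    (inferInstance : Ring (Endo C ρ)) with
    dist_eq := fun a b => (inferInstance : NormedAddCommGroup (C.Hom ρ ρ)).dist_eq a b
    norm_mul_le := fun a b => C.norm_comp_le a b }

instance : NormedAlgebra ℂ (Endo C ρ) :=
  { (inferInstance : Algebra ℂ (Endo C ρ)) with
    norm_smul_le := fun c a => (C.normedSpace ρ ρ).norm_smul_le c a }

instance : CStarRing (Endo C ρ) where
  norm_mul_self_le := fun a => by
    have h := C.cstar_norm (a : C.Hom ρ ρ)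
    have : ‖Star.star a * a‖ = ‖a‖ ^ 2 := h
    rw [this, pow_two]

instance : CStarAlgebra (Endo C ρ) := {}

end Endo

end StrictCTC

namespace StrictCTC

variable {C : StrictCTC}

section Scalars

theorem scalar_real {ρ σ : C.Obj} (f : C.Hom ρ σ) (c : ℂ)
    (h : f† ⊚ f = c • (𝟙 ρ)) : (starRingEnd ℂ) c = c := by
  have h2 : (f† ⊚ f)† = f† ⊚ f := by rw [C.star_comp, C.star_star]
  rw [h, C.star_smul, C.star_id] at h2
  exact scalar_unique h2

theorem comp_star_self_eq_zero {ρ σ : C.Obj} {f : C.Hom ρ σ}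
    (h : f† ⊚ f = 0) : f = 0 := by
  have := C.cstar_norm f
  rw [h, norm_zero] at this
  have : ‖f‖ = 0 := by nlinarith [norm_nonneg f]
  simpa [norm_eq_zero] using this

/-- positivity: if `f† ∘ f` is a scalar `c`, then `c` is real and nonnegative. -/
theorem pos_scalar
    (hsums : ∀ ρ σ : C.Obj, ∃ (τ : C.Obj) (V : C.Hom ρ τ) (W : C.Hom σ τ),
      C.IsIsometry V ∧ C.IsIsometry W ∧ V ⊚ V† + W ⊚ W† = 𝟙 τ)
    {ρ σ : C.Obj} (f : C.Hom ρ σ) (c : ℂ) (h : f† ⊚ f = c • (𝟙 ρ)) :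
    c = (c.re : ℂ) ∧ 0 ≤ c.re := by
  have hreal : (starRingEnd ℂ) c = c := scalar_real f c h
  have hc : c = (c.re : ℂ) := ((Complex.conj_eq_iff_re).mp hreal).symm
  refine ⟨hc, ?_⟩
  by_contra hlt
  push_neg at hlt
  obtain ⟨τ, P, Q, hP, hQ, -⟩ := hsums ρ σ
  set x : Endo C τ := Q ⊚ (f ⊚ P†) with hx
  set p : Endo C τ := P ⊚ P† with hp
  have hpp : p * p = p := by
    show (P ⊚ P†) ⊚ (P ⊚ P†) = P ⊚ P†
    rw [C.comp_assoc, ← C.comp_assoc (P†) P (P†), hP, C.id_comp]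
  have hxx : Star.star x * x = c • p := by
    show C.comp (C.star (Q ⊚ (f ⊚ P†))) (Q ⊚ (f ⊚ P†)) = c • (P ⊚ P†)
    rw [C.star_comp, C.star_comp, C.star_star, C.comp_assoc,
      ← C.comp_assoc (Q†) Q (f ⊚ P†), hQ, C.id_comp, C.comp_assoc P (f†) (f ⊚ P†),
      ← C.comp_assoc (f†) f (P†), h, C.comp_smul_left, C.id_comp, C.comp_smul_right]
  have hpne : p ≠ 0 := by
    intro h0
    have h1 : (𝟙 ρ : C.Hom ρ ρ) = P† ⊚ (p ⊚ P) := by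
      show (𝟙 ρ : C.Hom ρ ρ) = P† ⊚ ((P ⊚ P†) ⊚ P)
      rw [C.comp_assoc P (P†) P, hP, C.comp_id, hP]
    rw [h0] at h1
    have : (𝟙 ρ : C.Hom ρ ρ) = 0 := by
      rw [h1]; exact (congrArg (C.comp (P†)) (zero_comp P)).trans (comp_zero _)
    exact C.id_ne_zero ρ this
  have hmem : c.re ∈ spectrum ℝ (Star.star x * x) := by
    rw [spectrum.mem_iff]
    intro hu
    have hc1 : (c.re : ℝ) • (1 : Endo C τ) = c • (1 : Endo C τ) := by
      rw [← algebraMap_smul ℂ (c.re : ℝ) (1 : Endo C τ), Complex.coe_algebraMap, ← hc]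
    have key : (algebraMap ℝ (Endo C τ)) c.re - Star.star x * x = c • (1 - p) := by
      rw [Algebra.algebraMap_eq_smul_one, hxx, smul_sub, hc1]
    rw [key] at hu
    obtain ⟨u, hu⟩ := hu
    have hz : p * (c • (1 - p)) = 0 := by
      rw [mul_smul_comm, mul_sub, mul_one, hpp, sub_self, smul_zero]
    have hp0 : p = 0 := by
      calc p = p * 1 := (mul_one p).symm
      _ = p * (↑u * ↑u⁻¹) := by rw [u.mul_inv]
      _ = (p * ↑u) * ↑u⁻¹ := (mul_assoc _ _ _).symm
      _ = (p * (c • (1 - p))) * ↑u⁻¹ := by rw [hu]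
      _ = 0 := by rw [hz, zero_mul]
    exact hpne hp0
  have := spectrum_star_mul_self_nonneg (A := Endo C τ) (b := x) c.re hmem
  linarith

end Scalars

end StrictCTC

namespace StrictCTC

variable {C : StrictCTC}

section MainLemmas

theorem hookR_zero_a {ρ μ ν : C.Obj} (b : C.Hom C.unit (ρ ⊙ μ)) :
    hookR (0 : C.Hom C.unit (μ ⊙ ν)) b = 0 := by
  unfold hookR ir
  rw [tHom_zero_right, co_zero, co_zero, comp_zero]

theorem hookL_zero_a {σ μ ν : C.Obj} (b : C.Hom C.unit (ν ⊙ σ)) :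
    hookL (0 : C.Hom C.unit (μ ⊙ ν)) b = 0 := by
  unfold hookL il
  rw [tHom_zero_left, co_zero, co_zero, comp_zero]

variable {ρ ρb : C.Obj} {R : C.Hom C.unit (ρb ⊙ ρ)} {Rb : C.Hom C.unit (ρ ⊙ ρb)}

/-- `(1 ⊗ hookR Y Rb) ∘ R` recovers `Y` (Frobenius surjectivity). -/
theorem frob_recover (hC2 : hookR Rb R = 𝟙 ρb) (Y : C.Hom C.unit (ρb ⊙ ρ)) :
    ((𝟙 ρb) ⊗̂ hookR Y Rb) ⊚ R = Y := by
  rw [master1 Y Rb R]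
  have : hookL R Rb = 𝟙 ρb := by
    rw [← star_hookR Rb R, hC2, C.star_id]
  rw [this, C.tHom_id, C.id_comp]

/-- conjugates of irreducible objects are irreducible. -/
theorem irreducible_conj (hC1 : hookR R Rb = 𝟙 ρ) (hC2 : hookR Rb R = 𝟙 ρb)
    (hirr : C.Irreducible ρ) : C.Irreducible ρb := by
  intro x
  obtain ⟨d, hd⟩ := hirr (hookR ((x ⊗̂ (𝟙 ρ)) ⊚ R) Rb)
  refine ⟨d, ?_⟩
  have h1 : (x ⊗̂ (𝟙 ρ)) ⊚ R = d • R := by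
    rw [← frob_recover hC2 ((x ⊗̂ (𝟙 ρ)) ⊚ R), hd, C.tHom_smul_right, C.comp_smul_left,
      C.tHom_id, C.id_comp]
  have h2 : hookL ((x ⊗̂ (𝟙 ρ)) ⊚ R) Rb = x := by
    rw [hookL_deco_μ, ← star_hookR Rb R, hC2, C.star_id, C.comp_id]
  rw [← h2, h1, hookL_smul_a]
  congr 1
  rw [← star_hookR Rb R, hC2, C.star_id]

/-- `R` in a conjugate pair is nonzero. -/
theorem conj_R_ne_zero (hC1 : hookR R Rb = 𝟙 ρ) : R ≠ 0 := by
  intro h0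
  apply C.id_ne_zero ρ
  rw [← hC1, h0, hookR_zero_a]

end MainLemmas

section StdCompare

variable {σ σb₁ σb₂ : C.Obj}
variable {R₁ : C.Hom C.unit (σb₁ ⊙ σ)} {Rb₁ : C.Hom C.unit (σ ⊙ σb₁)}
variable {R₂ : C.Hom C.unit (σb₂ ⊙ σ)} {Rb₂ : C.Hom C.unit (σ ⊙ σb₂)}

/-- identity `(1 ⊗ (hookL R₂ Rb₁)†) ∘ Rb₂ = Rb₁` (holds for any two conjugate pairs). -/
theorem comparison_Rb (hC1₂ : hookR R₂ Rb₂ = 𝟙 σ)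
    (hU : True) :
    ((𝟙 σ) ⊗̂ (hookL R₂ Rb₁)†) ⊚ Rb₂ = Rb₁ := by
  rw [star_hookL, master1 Rb₁ R₂ Rb₂]
  have : hookL Rb₂ R₂ = 𝟙 σ := by
    rw [← star_hookR R₂ Rb₂, hC1₂, C.star_id]
  rw [this, C.tHom_id, C.id_comp]

/-- identity `((hookL R₂ Rb₁) ⊗ 1) ∘ R₁ = R₂` (holds for any two conjugate pairs). -/
theorem comparison_R (hC1₁ : hookR R₁ Rb₁ = 𝟙 σ) :
    ((hookL R₂ Rb₁) ⊗̂ (𝟙 σ)) ⊚ R₁ = R₂ := by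
  rw [master2 R₂ Rb₁ R₁, hC1₁, C.tHom_id, C.id_comp]

/-- the comparison morphism is invertible: `hookL R₁ Rb₂ ∘ hookL R₂ Rb₁ = 1`. -/
theorem comparison_inv (hC1₂ : hookR R₂ Rb₂ = 𝟙 σ) (hC2₁ : hookR Rb₁ R₁ = 𝟙 σb₁) :
    hookL R₁ Rb₂ ⊚ hookL R₂ Rb₁ = 𝟙 σb₁ := by
  rw [hookL_nat, star_hookL, master1 Rb₁ R₂ Rb₂]
  have h1 : hookL Rb₂ R₂ = 𝟙 σ := by
    rw [← star_hookR R₂ Rb₂, hC1₂, C.star_id]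
  rw [h1, C.tHom_id, C.id_comp, ← star_hookR Rb₁ R₁, hC2₁, C.star_id]

end StdCompare

end StrictCTC

namespace StrictCTC

variable {C : StrictCTC}

section StdUnitary

variable {σ σb₁ σb₂ : C.Obj}
variable {R₁ : C.Hom C.unit (σb₁ ⊙ σ)} {Rb₁ : C.Hom C.unit (σ ⊙ σb₁)}
variable {R₂ : C.Hom C.unit (σb₂ ⊙ σ)} {Rb₂ : C.Hom C.unit (σ ⊙ σb₂)}

/-- Any two standard pairs for an irreducible object are related by a unitary. -/
theorem std_unitary
    (hsums : ∀ ρ σ : C.Obj, ∃ (τ : C.Obj) (V : C.Hom ρ τ) (W : C.Hom σ τ),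
      C.IsIsometry V ∧ C.IsIsometry W ∧ V ⊚ V† + W ⊚ W† = 𝟙 τ)
    (hirr : C.Irreducible σ)
    (hC1₁ : hookR R₁ Rb₁ = 𝟙 σ) (hC2₁ : hookR Rb₁ R₁ = 𝟙 σb₁)
    (hst₁ : R₁† ⊚ R₁ = Rb₁† ⊚ Rb₁)
    (hC1₂ : hookR R₂ Rb₂ = 𝟙 σ) (hC2₂ : hookR Rb₂ R₂ = 𝟙 σb₂)
    (hst₂ : R₂† ⊚ R₂ = Rb₂† ⊚ Rb₂) :
    C.IsUnitary (hookL R₂ Rb₁) := by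
  set U := hookL R₂ Rb₁ with hUdef
  have hVU : hookL R₁ Rb₂ ⊚ U = 𝟙 σb₁ := comparison_inv hC1₂ hC2₁
  have hUV : U ⊚ hookL R₁ Rb₂ = 𝟙 σb₂ := comparison_inv hC1₁ hC2₂
  have hirr1 : C.Irreducible σb₁ := irreducible_conj hC1₁ hC2₁ hirr
  have hirr2 : C.Irreducible σb₂ := irreducible_conj hC1₂ hC2₂ hirr
  obtain ⟨μ, hμ⟩ := hirr1 (U† ⊚ U)
  have hUne : U ≠ 0 := by
    intro h0
    apply C.id_ne_zero σb₁
    rw [← hVU, h0, comp_zero]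
  obtain ⟨hμre, hμnn⟩ := pos_scalar hsums U μ hμ
  have hμne : μ ≠ 0 := by
    intro h0
    rw [h0, zero_smul] at hμ
    exact hUne (comp_star_self_eq_zero hμ)
  obtain ⟨μ', hμ'⟩ := hirr2 (U ⊚ U†)
  have hμμ' : μ' = μ := by
    have h1 : U ⊚ (U† ⊚ U) = (U ⊚ U†) ⊚ U := (C.comp_assoc _ _ _).symm
    rw [hμ, hμ', C.comp_smul_right, C.comp_id, C.comp_smul_left, C.id_comp] at h1
    exact (smul_cancel hUne h1).symm
  have hR2 : (U ⊗̂ (𝟙 σ)) ⊚ R₁ = R₂ := comparison_R hC1₁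
  have hRb1 : ((𝟙 σ) ⊗̂ U†) ⊚ Rb₂ = Rb₁ := comparison_Rb hC1₂ trivial
  have hd2 : R₂† ⊚ R₂ = μ • (R₁† ⊚ R₁) := by
    rw [← hR2, C.star_comp, C.star_tHom, C.star_id, C.comp_assoc,
      ← C.comp_assoc ((U†) ⊗̂ (𝟙 σ)) (U ⊗̂ (𝟙 σ)) R₁, comp_tHom_id_right, hμ,
      C.tHom_smul_left, C.tHom_id, C.comp_smul_left, C.id_comp, C.comp_smul_right]
  have hd1 : Rb₁† ⊚ Rb₁ = μ • (Rb₂† ⊚ Rb₂) := by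
    rw [← hRb1, C.star_comp, C.star_tHom, C.star_id, C.star_star, C.comp_assoc,
      ← C.comp_assoc ((𝟙 σ) ⊗̂ U) ((𝟙 σ) ⊗̂ (U†)) Rb₂, comp_tHom_id_left, hμ', hμμ',
      C.tHom_smul_right, C.tHom_id, C.comp_smul_left, C.id_comp, C.comp_smul_right]
  have hD : (1 : ℂ) • (R₁† ⊚ R₁) = (μ * μ) • (R₁† ⊚ R₁) := by
    rw [one_smul]
    calc R₁† ⊚ R₁ = Rb₁† ⊚ Rb₁ := hst₁
      _ = μ • (Rb₂† ⊚ Rb₂) := hd1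
      _ = μ • (R₂† ⊚ R₂) := by rw [hst₂]
      _ = μ • (μ • (R₁† ⊚ R₁)) := by rw [hd2]
      _ = (μ * μ) • (R₁† ⊚ R₁) := (mul_smul μ μ _).symm
  have hDne : R₁† ⊚ R₁ ≠ 0 := fun h0 => conj_R_ne_zero hC1₁ (comp_star_self_eq_zero h0)
  have hμ2 : (1 : ℂ) = μ * μ := smul_cancel hDne hD
  have hμ1 : μ = 1 := by
    rw [hμre] at hμ2
    have h3 : ((1 : ℝ) : ℂ) = ((μ.re * μ.re : ℝ) : ℂ) := by push_cast; exact hμ2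
    have h4 : (1 : ℝ) = μ.re * μ.re := Complex.ofReal_inj.mp h3
    have h5 : μ.re = 1 := by nlinarith
    rw [hμre, h5, Complex.ofReal_one]
  constructor
  · rw [hμ, hμ1, one_smul]
  · rw [hμ', hμμ', hμ1, one_smul]

end StdUnitary

end StrictCTC

namespace StrictCTC

variable {C : StrictCTC}

section IrrCompare

variable {σ σb τ τb : C.Obj}

/-- The central lemma: for standard pairs of irreducibles, the left and right
Frobenius transposes of any morphism agree. -/
theorem irr_compare
    (hsums : ∀ ρ σ : C.Obj, ∃ (τ : C.Obj) (V : C.Hom ρ τ) (W : C.Hom σ τ),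
      C.IsIsometry V ∧ C.IsIsometry W ∧ V ⊚ V† + W ⊚ W† = 𝟙 τ)
    {Rσ : C.Hom C.unit (σb ⊙ σ)} {Rbσ : C.Hom C.unit (σ ⊙ σb)}
    {Rτ : C.Hom C.unit (τb ⊙ τ)} {Rbτ : C.Hom C.unit (τ ⊙ τb)}
    (hirrσ : C.Irreducible σ) (hirrτ : C.Irreducible τ)
    (hC1σ : hookR Rσ Rbσ = 𝟙 σ) (hC2σ : hookR Rbσ Rσ = 𝟙 σb)
    (hstσ : Rσ† ⊚ Rσ = Rbσ† ⊚ Rbσ)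
    (hC1τ : hookR Rτ Rbτ = 𝟙 τ) (hC2τ : hookR Rbτ Rτ = 𝟙 τb)
    (hstτ : Rτ† ⊚ Rτ = Rbτ† ⊚ Rbτ)
    (u : C.Hom σ τ) :
    hookR Rbσ (((𝟙 τb) ⊗̂ u†) ⊚ Rτ) = hookL Rσ ((u† ⊗̂ (𝟙 τb)) ⊚ Rbτ) := by
  by_cases hu : u = 0
  · rw [hu, star_zero', tHom_zero_right, zero_comp, hookR_zero_b,
      tHom_zero_left, zero_comp, hookL_zero_b]
  obtain ⟨c, hc⟩ := hirrσ (u† ⊚ u)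
  obtain ⟨hcre, hcnn⟩ := pos_scalar hsums u c hc
  have hcne : c ≠ 0 := fun h0 => hu (comp_star_self_eq_zero (by rw [hc, h0, zero_smul]))
  have hcrene : c.re ≠ 0 := fun h0 => hcne (by rw [hcre, h0, Complex.ofReal_zero])
  have hcpos : 0 < c.re := lt_of_le_of_ne hcnn (Ne.symm hcrene)
  set s : ℝ := Real.sqrt c.re with hsdef
  have hspos : 0 < s := Real.sqrt_pos.mpr hcpos
  have hsne : (s : ℂ) ≠ 0 := by simpa using hspos.ne'
  have hs2 : (s : ℂ) * (s : ℂ) = c := by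
    rw [← Complex.ofReal_mul, Real.mul_self_sqrt hcpos.le, ← hcre]
  set w : C.Hom σ τ := ((s : ℂ)⁻¹) • u with hwdef
  have hsinv : (starRingEnd ℂ) ((s : ℂ)⁻¹) = (s : ℂ)⁻¹ := by
    rw [map_inv₀, Complex.conj_ofReal]
  have hkey : (s : ℂ)⁻¹ * (s : ℂ)⁻¹ * c = 1 := by rw [← hs2]; field_simp
  have hww : w† ⊚ w = 𝟙 σ := by
    rw [hwdef, C.star_smul, C.comp_smul_left, C.comp_smul_right, hc, smul_smul, smul_smul,
      hsinv, hkey, one_smul]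
  obtain ⟨c', hc'⟩ := hirrτ (u ⊚ u†)
  have hcc' : c' = c := by
    have h1 : u ⊚ (u† ⊚ u) = (u ⊚ u†) ⊚ u := (C.comp_assoc _ _ _).symm
    rw [hc, hc', C.comp_smul_right, C.comp_id, C.comp_smul_left, C.id_comp] at h1
    exact (smul_cancel hu h1).symm
  have hww' : w ⊚ w† = 𝟙 τ := by
    rw [hwdef, C.star_smul, C.comp_smul_left, C.comp_smul_right, hc', hcc', smul_smul,
      smul_smul, hsinv, hkey, one_smul]
  have hC1' : hookR (((𝟙 τb) ⊗̂ w†) ⊚ Rτ) ((w† ⊗̂ (𝟙 τb)) ⊚ Rbτ) = 𝟙 σ := by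
    rw [hookR_deco_ν, hookR_b_deco, C.star_id, C.star_star, C.tHom_id, C.id_comp, hC1τ,
      C.id_comp, hww]
  have hC2' : hookR ((w† ⊗̂ (𝟙 τb)) ⊚ Rbτ) (((𝟙 τb) ⊗̂ w†) ⊚ Rτ) = 𝟙 τb := by
    rw [hookR_deco_μ, C.star_star, ← C.comp_assoc, comp_tHom_id_left, hww', C.tHom_id,
      C.id_comp, hC2τ]
  have hst' : (((𝟙 τb) ⊗̂ w†) ⊚ Rτ)† ⊚ (((𝟙 τb) ⊗̂ w†) ⊚ Rτ)
      = ((w† ⊗̂ (𝟙 τb)) ⊚ Rbτ)† ⊚ ((w† ⊗̂ (𝟙 τb)) ⊚ Rbτ) := by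
    rw [C.star_comp, C.star_tHom, C.star_id, C.star_star, C.star_comp, C.star_tHom,
      C.star_id, C.star_star]
    rw [C.comp_assoc, ← C.comp_assoc ((𝟙 τb) ⊗̂ w) ((𝟙 τb) ⊗̂ (w†)) Rτ, comp_tHom_id_left,
      hww', C.tHom_id, C.id_comp]
    rw [C.comp_assoc, ← C.comp_assoc (w ⊗̂ (𝟙 τb)) ((w†) ⊗̂ (𝟙 τb)) Rbτ, comp_tHom_id_right,
      hww', C.tHom_id, C.id_comp]
    exact hstτ
  obtain ⟨U, hUuni, hR', hRbσ⟩ :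
      ∃ U : C.Hom σb τb, C.IsUnitary U ∧
        (U ⊗̂ (𝟙 σ)) ⊚ Rσ = ((𝟙 τb) ⊗̂ w†) ⊚ Rτ ∧
        ((𝟙 σ) ⊗̂ U†) ⊚ ((w† ⊗̂ (𝟙 τb)) ⊚ Rbτ) = Rbσ :=
    ⟨hookL (((𝟙 τb) ⊗̂ w†) ⊚ Rτ) Rbσ,
      std_unitary hsums hirrσ hC1σ hC2σ hstσ hC1' hC2' hst',
      comparison_R hC1σ, comparison_Rb hC1' trivial⟩
  have hRσ : (U† ⊗̂ (𝟙 σ)) ⊚ (((𝟙 τb) ⊗̂ w†) ⊚ Rτ) = Rσ := by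
    rw [← hR', ← C.comp_assoc, comp_tHom_id_right, hUuni.1, C.tHom_id, C.id_comp]
  have hu_w : u† = (s : ℂ) • w† := by
    rw [hwdef, C.star_smul, hsinv, smul_smul, mul_inv_cancel₀ hsne, one_smul]
  rw [show ((𝟙 τb) ⊗̂ u†) ⊚ Rτ = (s : ℂ) • (((𝟙 τb) ⊗̂ w†) ⊚ Rτ) from by
    rw [hu_w, C.tHom_smul_right, C.comp_smul_left]]
  rw [show (u† ⊗̂ (𝟙 τb)) ⊚ Rbτ = (s : ℂ) • ((w† ⊗̂ (𝟙 τb)) ⊚ Rbτ) from by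
    rw [hu_w, C.tHom_smul_left, C.comp_smul_left]]
  rw [hookR_smul_b, hookL_smul_b]
  congr 1
  have hL : hookR Rbσ (((𝟙 τb) ⊗̂ w†) ⊚ Rτ) = U† := by
    rw [← hRbσ, hookR_deco_ν, hC2', C.comp_id]
  have hRfin : hookL Rσ ((w† ⊗̂ (𝟙 τb)) ⊚ Rbτ) = U† := by
    rw [← hRσ, hookL_deco_μ]
    have h9 : hookL (((𝟙 τb) ⊗̂ w†) ⊚ Rτ) ((w† ⊗̂ (𝟙 τb)) ⊚ Rbτ) = 𝟙 τb := by
      rw [← star_hookR, hC2', C.star_id]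
    rw [h9, C.comp_id]
  rw [hL, hRfin]

end IrrCompare

end StrictCTC

namespace StrictCTC

variable {C : StrictCTC}

section HookStd

/-- For two standard pairs on the same object `ρ`, the two comparison maps agree. -/
theorem std_hook_eq (hreg : IsRegularCTC C) {ρ ρb ρt : C.Obj}
    {R : C.Hom C.unit (ρb ⊙ ρ)} {Rb : C.Hom C.unit (ρ ⊙ ρb)}
    {T : C.Hom C.unit (ρt ⊙ ρ)} {Tb : C.Hom C.unit (ρ ⊙ ρt)}
    (hstdR : C.IsStandardPair ρ ρb R Rb) (hstdT : C.IsStandardPair ρ ρt T Tb) :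
    hookR Rb T = hookL R Tb := by
  obtain ⟨-, n, σ, σb, W, Wb, Ri, Rbi, hWiso, hWbiso, -, -, hstdi, hRdef, hRbdef⟩ := hstdR
  obtain ⟨-, m, τ, τb, V, Vb, Ti, Tbi, hViso, hVbiso, -, -, hstdiT, hTdef, hTbdef⟩ := hstdT
  rw [hRbdef, hTdef, hRdef, hTbdef, hookR_sum_a, hookL_sum_a]
  refine Finset.sum_congr rfl fun j _ => ?_
  rw [hookR_sum_b, hookL_sum_b]
  refine Finset.sum_congr rfl fun i _ => ?_
  -- left term
  have haL : (W j ⊗̂ Wb j) ⊚ Rbi j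
      = ((𝟙 ρ) ⊗̂ Wb j) ⊚ ((W j ⊗̂ (𝟙 (σb j))) ⊚ Rbi j) := by
    rw [← C.comp_assoc, exch_rl]
  have hbL : ((𝟙 ρt) ⊗̂ (W j)†) ⊚ ((Vb i ⊗̂ V i) ⊚ Ti i)
      = ((Vb i) ⊗̂ ((W j)† ⊚ V i)) ⊚ Ti i := by
    rw [← C.comp_assoc, C.interchange, C.id_comp]
  have hL : hookR ((W j ⊗̂ Wb j) ⊚ Rbi j) ((Vb i ⊗̂ V i) ⊚ Ti i)
      = Wb j ⊚ ((hookR (Rbi j) (((𝟙 (τb i)) ⊗̂ ((V i)† ⊚ W j)†) ⊚ Ti i)) ⊚ (Vb i)†) := by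
    rw [haL, hookR_deco_ν, hookR_deco_μ, hbL, hookR_b_deco, hookR_deco_μ, C.star_comp,
      C.star_star]
  -- right term
  have haR : (Wb j ⊗̂ W j) ⊚ Ri j
      = ((Wb j ⊗̂ (𝟙 ρ)) ⊚ (((𝟙 (σb j)) ⊗̂ W j) ⊚ Ri j)) := by
    rw [← C.comp_assoc, exch_lr]
  have hbR : ((W j)† ⊗̂ (𝟙 ρt)) ⊚ ((V i ⊗̂ Vb i) ⊚ Tbi i)
      = (((W j)† ⊚ V i) ⊗̂ (Vb i)) ⊚ Tbi i := by
    rw [← C.comp_assoc, C.interchange, C.id_comp]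
  have hR : hookL ((Wb j ⊗̂ W j) ⊚ Ri j) ((V i ⊗̂ Vb i) ⊚ Tbi i)
      = Wb j ⊚ ((hookL (Ri j) ((((V i)† ⊚ W j)† ⊗̂ (𝟙 (τb i))) ⊚ Tbi i)) ⊚ (Vb i)†) := by
    rw [haR, hookL_deco_μ, hookL_deco_ν, hbR]
    rw [show ((W j)† ⊚ V i) ⊗̂ (Vb i) = (((V i)† ⊚ W j)†) ⊗̂ (Vb i) by
      rw [C.star_comp, C.star_star]]
    rw [hookL_b_deco, C.star_star, hookL_deco_ν]
  rw [hL, hR]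
  -- compare cores via irr_compare
  obtain ⟨hirrj, hcpj, hstj⟩ := hstdi j
  obtain ⟨hirri, hcpi, hsti⟩ := hstdiT i
  obtain ⟨hC1j, hC2j⟩ := conjPair_iff.mp hcpj
  obtain ⟨hC1i, hC2i⟩ := conjPair_iff.mp hcpi
  rw [irr_compare hreg.hasSums hirrj hirri hC1j hC2j hstj hC1i hC2i hsti ((V i)† ⊚ W j)]

end HookStd

end StrictCTC

/-- Lemma 1.14.  Let `ρ` be an object of a regular
`C*`-tensor category with conjugate `ρ̄` and standard pair of conjugation
operators `(R, R̄)`.  Let `ρ̃` be any conjugate of `ρ` and `T ∈ (ι, ρ̃ρ)`.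
Then there exists `T̄ ∈ (ι, ρρ̃)` such that `(T, T̄)` is a standard pair of
conjugation operators if and only if there is a unitary `U ∈ (ρ̄, ρ̃)` with
`(U × 1_ρ) ∘ R = T`. -/
theorem standard_pair_characterization (C : StrictCTC) (hreg : IsRegularCTC C)
    (ρ ρb : C.Obj) (R : C.Hom C.unit (C.tObj ρb ρ)) (Rb : C.Hom C.unit (C.tObj ρ ρb))
    (hstd : C.IsStandardPair ρ ρb R Rb)
    (ρt : C.Obj) (hconj : C.Conjugate ρ ρt)
    (T : C.Hom C.unit (C.tObj ρt ρ)) :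
    (∃ Tb : C.Hom C.unit (C.tObj ρ ρt), C.IsStandardPair ρ ρt T Tb) ↔
    (∃ U : C.Hom ρb ρt, C.IsUnitary U ∧ C.comp (C.tHom U (C.id ρ)) R = T) := by
  open StrictCTC in
  constructor
  · rintro ⟨Tb, hstdT⟩
    obtain ⟨hC1R, hC2R⟩ := conjPair_iff.mp hstd.1
    obtain ⟨hC1T, hC2T⟩ := conjPair_iff.mp hstdT.1
    refine ⟨hookL T Rb, ?_, comparison_R hC1R⟩
    have hstar : (hookL T Rb)† = hookL R Tb := by
      rw [star_hookL, std_hook_eq hreg hstd hstdT]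
    constructor
    · rw [hstar]; exact comparison_inv hC1T hC2R
    · rw [hstar]; exact comparison_inv hC1R hC2T
  · rintro ⟨U, hUuni, hUT⟩
    obtain ⟨hC1R, hC2R⟩ := conjPair_iff.mp hstd.1
    refine ⟨((𝟙 ρ) ⊗̂ U) ⊚ Rb, ?_, ?_⟩
    · rw [conjPair_iff]
      constructor
      · rw [← hUT, hookR_deco_μ, ← C.comp_assoc, comp_tHom_id_left, hUuni.1, C.tHom_id,
          C.id_comp, hC1R]
      · rw [← hUT, hookR_deco_ν, hookR_b_deco, C.star_id, C.tHom_id, C.id_comp, hC2R,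
          C.id_comp, hUuni.2]
    · obtain ⟨-, nn, σ, σb, W, Wb, Ri, Rbi, hWiso, hWbiso, hWsum, hWbsum, hstdi, hRdef,
        hRbdef⟩ := hstd
      refine ⟨nn, σ, σb, W, fun i => U ⊚ Wb i, Ri, Rbi, hWiso, ?_, hWsum, ?_, hstdi, ?_, ?_⟩
      · intro i
        show (U ⊚ Wb i)† ⊚ (U ⊚ Wb i) = 𝟙 (σb i)
        rw [C.star_comp, C.comp_assoc, ← C.comp_assoc (U†) U (Wb i), hUuni.1, C.id_comp]
        exact hWbiso i
      · have h1 : ∀ i : Fin nn, (U ⊚ Wb i) ⊚ (U ⊚ Wb i)† = U ⊚ ((Wb i ⊚ (Wb i)†) ⊚ U†) := by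
          intro i
          rw [C.star_comp, C.comp_assoc, C.comp_assoc]
        calc (∑ i, (U ⊚ Wb i) ⊚ (U ⊚ Wb i)†) = ∑ i, U ⊚ ((Wb i ⊚ (Wb i)†) ⊚ U†) :=
              Finset.sum_congr rfl fun i _ => h1 i
          _ = U ⊚ ((∑ i, Wb i ⊚ (Wb i)†) ⊚ U†) := by rw [← comp_sum, ← sum_comp]
          _ = 𝟙 ρt := by rw [hWbsum, C.id_comp, hUuni.2]
      · rw [← hUT, hRdef, comp_sum]
        refine Finset.sum_congr rfl fun i _ => ?_
        rw [← C.comp_assoc, C.interchange, C.id_comp]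
      · rw [hRbdef, comp_sum]
        refine Finset.sum_congr rfl fun i _ => ?_
        rw [← C.comp_assoc, C.interchange, C.id_comp]
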